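/- Let S_r > S_p ≥ 0, R ∈ ℕ with R ≥ 1, d_max ≥ 0, and suppose ALG ≤ 2(C_out^ALG + d_max·⌊log₂ R⌋)/((S_r - S_p)(1 + ⌊log₂ R⌋)), C_out^ALG ≤ 3·C_in^ALG + 6, C_in^ALG ≤ 6·C_in^BEST, OPT ≥ (C_in^BEST - 1)/((S_r+S_p)·R), and d_max/(S_r+S_p) ≤ OPT. Then ALG ≤ (2(S_r+S_p)(18R + ⌊log₂ R⌋)/((S_r - S_p)(1 + ⌊log₂ R⌋)))·OPT + 48/((S_r - S_p)(1 + ⌊log₂ R⌋)). -/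
import Mathlib


/-- Competitive ratio for an arbitrarily shaped fat ROI. -/
theorem competitive_ratio_arbitrary
    (Sr Sp ALG OPT Cout Cin Cbest dMax : ℝ) (R : ℕ)
    (hSp : 0 ≤ Sp) (hSr : Sp < Sr) (hR : 1 ≤ R) (hd : 0 ≤ dMax)
    (hCbest : 1 ≤ Cbest) (hCout : 0 ≤ Cout) (hCin : 0 ≤ Cin)
    (hALG : ALG ≤ 2 * (Cout + dMax * (Nat.log 2 R : ℝ)) /
      ((Sr - Sp) * (1 + (Nat.log 2 R : ℝ))))
    (hOut : Cout ≤ 3 * Cin + 6)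
    (hIn : Cin ≤ 6 * Cbest)
    (hOPT : OPT ≥ (Cbest - 1) / ((Sr + Sp) * (R : ℝ)))
    (hdOPT : dMax / (Sr + Sp) ≤ OPT) :
    ALG ≤ (2 * (Sr + Sp) * (18 * (R : ℝ) + (Nat.log 2 R : ℝ)) /
        ((Sr - Sp) * (1 + (Nat.log 2 R : ℝ)))) * OPT +
      48 / ((Sr - Sp) * (1 + (Nat.log 2 R : ℝ))) := by
  set L : ℝ := (Nat.log 2 R : ℝ) with hL
  have hL0 : 0 ≤ L := Nat.cast_nonneg _
  have hRpos : (0:ℝ) < (R : ℝ) := by exact_mod_cast hR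
  have hSsum : 0 < Sr + Sp := by linarith
  have hD : 0 < (Sr - Sp) * (1 + L) := by
    apply mul_pos <;> linarith
  have hdM : dMax ≤ (Sr + Sp) * OPT := by
    have := (div_le_iff₀ hSsum).mp hdOPT
    linarith
  have hCb : Cbest - 1 ≤ (Sr + Sp) * (R : ℝ) * OPT := by
    have := (div_le_iff₀ (mul_pos hSsum hRpos)).mp hOPT
    linarith
  have hnum : 2 * (Cout + dMax * L) ≤
      2 * (Sr + Sp) * (18 * (R : ℝ) + L) * OPT + 48 := by
    have hOPT0 : 0 ≤ OPT := le_trans (div_nonneg hd hSsum.le) hdOPT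
    nlinarith [mul_le_mul_of_nonneg_right hdM hL0]
  calc ALG ≤ 2 * (Cout + dMax * L) / ((Sr - Sp) * (1 + L)) := hALG
    _ ≤ (2 * (Sr + Sp) * (18 * (R : ℝ) + L) * OPT + 48) / ((Sr - Sp) * (1 + L)) := by
        gcongr
    _ = (2 * (Sr + Sp) * (18 * (R : ℝ) + L) / ((Sr - Sp) * (1 + L))) * OPT +
        48 / ((Sr - Sp) * (1 + L)) := by ring
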